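/- Assume moreover that {i ∈ ℐ : |i|_ℐ ≤ R} is finite for every R > 0. Then for every ε > 0 there exists R > 0 such that every (y, g) ∈ Δ_ℐ^free × Γ with |(y, g)|_free > R satisfies |supp(y)| ≤ ε·|(y, g)|_free, where |supp(y)| denotes the cardinality of supp(y). In other words, |supp(y)| / |(y, g)|_free → 0 as |(y, g)|_free → ∞. -/

import Mathlib

noncomputable section

/-- The ℓ¹-norm of a finitely supported real-valued function. -/
def l1Norm {X : Type*} (φ : X →₀ ℝ) : ℝ := ∑ x ∈ φ.support, |φ x|

variable {ι Δ Γ : Type*} [Group Δ] [Group Γ] [MulAction Γ ι]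
  [DecidableEq ι] [DecidableEq Δ]

/-- The action of `Γ` on the free product `∗_{i∈ι} Δ` permuting the factors. -/
def permHom (g : Γ) :
    Monoid.CoprodI (fun _ : ι => Δ) →* Monoid.CoprodI (fun _ : ι => Δ) :=
  Monoid.CoprodI.lift fun i => Monoid.CoprodI.of (M := fun _ : ι => Δ) (i := g • i)

/-- The reduced word of an element of the free product, as a list of letters. -/
def wordList (y : Monoid.CoprodI (fun _ : ι => Δ)) : List (Σ _ : ι, Δ) :=
  (Monoid.CoprodI.Word.equiv y).toList

/-- The support `supp(y) ⊆ ι` of an element of the free product. -/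
def freeSupp (y : Monoid.CoprodI (fun _ : ι => Δ)) : Finset ι :=
  ((wordList y).map Sigma.fst).toFinset

/-- `a(y) := Σₖ |y_{iₖ}|_Δ·δ_{iₖ}`. -/
def aFn (nD : Δ → ℝ) (y : Monoid.CoprodI (fun _ : ι => Δ)) : ι →₀ ℝ :=
  ((wordList y).map fun p => Finsupp.single p.1 (nD p.2)).sum

/-- `m(y, g) := Σ_{i ∈ supp(y)} min{|i|_ι, |g⁻¹·i|_ι}·δ_i`. -/
def mFn (nI : ι → ℝ) (y : Monoid.CoprodI (fun _ : ι => Δ)) (g : Γ) : ι →₀ ℝ :=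
  ∑ i ∈ freeSupp y, Finsupp.single i (min (nI i) (nI (g⁻¹ • i)))

lemma aFn_apply (nD : Δ → ℝ) (y : Monoid.CoprodI (fun _ : ι => Δ)) (j : ι) :
    aFn nD y j = ((wordList y).map fun p => if p.1 = j then nD p.2 else 0).sum := by
  have := map_list_sum (Finsupp.applyAddHom (M := ℝ) j)
    ((wordList y).map fun p => Finsupp.single p.1 (nD p.2))
  simpa [List.map_map, Function.comp_def, Finsupp.applyAddHom_apply, Finsupp.single_apply, aFn] using this

lemma one_le_aFn (nD : Δ → ℝ) (hD1 : ∀ d : Δ, d ≠ 1 → 1 ≤ nD d)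
    (y : Monoid.CoprodI (fun _ : ι => Δ)) {j : ι} (hj : j ∈ freeSupp y) :
    1 ≤ aFn nD y j := by
  rw [aFn_apply]
  obtain ⟨p, hp, hpj⟩ : ∃ p ∈ wordList y, p.1 = j := by
    simpa [freeSupp] using hj
  have hne : p.2 ≠ 1 := (Monoid.CoprodI.Word.equiv y).ne_one p hp
  have h1 : (1:ℝ) ≤ (if p.1 = j then nD p.2 else 0) := by
    simp [hpj, hD1 p.2 hne]
  refine h1.trans (List.single_le_sum ?_ _ (List.mem_map_of_mem hp))
  intro x hx
  simp only [List.mem_map] at hx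
  obtain ⟨q, hq, rfl⟩ := hx
  split
  · exact le_trans zero_le_one (hD1 q.2 ((Monoid.CoprodI.Word.equiv y).ne_one q hq))
  · exact le_refl 0

lemma aFn_nonneg (nD : Δ → ℝ) (hD1 : ∀ d : Δ, d ≠ 1 → 1 ≤ nD d)
    (y : Monoid.CoprodI (fun _ : ι => Δ)) (j : ι) : 0 ≤ aFn nD y j := by
  rw [aFn_apply]
  apply List.sum_nonneg
  intro x hx
  simp only [List.mem_map] at hx
  obtain ⟨q, hq, rfl⟩ := hx
  split
  · exact le_trans zero_le_one (hD1 q.2 ((Monoid.CoprodI.Word.equiv y).ne_one q hq))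
  · exact le_refl 0

lemma mFn_apply (nI : ι → ℝ) (y : Monoid.CoprodI (fun _ : ι => Δ)) (g : Γ) (j : ι) :
    mFn nI y g j = if j ∈ freeSupp y then min (nI j) (nI (g⁻¹ • j)) else 0 := by
  rw [mFn, Finset.sum_apply']
  simp [Finsupp.single_apply]

/-- `ω(y, g) := m(y, g) + a(y)`. -/
def omegaFree (nI : ι → ℝ) (nD : Δ → ℝ)
    (y : Monoid.CoprodI (fun _ : ι => Δ)) (g : Γ) : ι →₀ ℝ :=
  mFn nI y g + aFn nD y


/-- `|(y, g)|_free := ‖ω(y, g)‖₁`. -/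
def freeLen (nI : ι → ℝ) (nD : Δ → ℝ)
    (y : Monoid.CoprodI (fun _ : ι => Δ)) (g : Γ) : ℝ :=
  l1Norm (omegaFree nI nD y g)

lemma omegaFree_nonneg (nI : ι → ℝ) (nD : Δ → ℝ) (hI0 : ∀ i, 0 ≤ nI i)
    (hD1 : ∀ d : Δ, d ≠ 1 → 1 ≤ nD d)
    (y : Monoid.CoprodI (fun _ : ι => Δ)) (g : Γ) (j : ι) :
    0 ≤ omegaFree nI nD y g j := by
  have h1 : 0 ≤ mFn nI y g j := by
    rw [mFn_apply]
    split <;> first | exact le_min (hI0 _) (hI0 _) | exact le_rfl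
  have h2 := aFn_nonneg nD hD1 y j
  simpa [omegaFree] using add_nonneg h1 h2

lemma sum_omega_le_freeLen (nI : ι → ℝ) (nD : Δ → ℝ) (hI0 : ∀ i, 0 ≤ nI i)
    (hD1 : ∀ d : Δ, d ≠ 1 → 1 ≤ nD d)
    (y : Monoid.CoprodI (fun _ : ι => Δ)) (g : Γ) :
    ∑ i ∈ freeSupp y, omegaFree nI nD y g i ≤ freeLen nI nD y g := by
  have hsub : freeSupp y ⊆ (omegaFree nI nD y g).support := by
    intro j hj
    have h1 : 0 ≤ mFn nI y g j := by
      rw [mFn_apply]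
      split <;> first | exact le_min (hI0 _) (hI0 _) | exact le_rfl
    have h2 := one_le_aFn nD hD1 y hj
    have : (0:ℝ) < omegaFree nI nD y g j := by
      have : (1:ℝ) ≤ omegaFree nI nD y g j := by
        simpa [omegaFree] using add_le_add h1 h2
      linarith
    simp [Finsupp.mem_support_iff, this.ne']
  calc ∑ i ∈ freeSupp y, omegaFree nI nD y g i
      ≤ ∑ i ∈ (omegaFree nI nD y g).support, omegaFree nI nD y g i :=
        Finset.sum_le_sum_of_subset_of_nonneg hsub
          (fun i _ _ => omegaFree_nonneg nI nD hI0 hD1 y g i)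
    _ = freeLen nI nD y g := by
        rw [freeLen, l1Norm]
        exact Finset.sum_congr rfl fun i _ =>
          (abs_of_nonneg (omegaFree_nonneg nI nD hI0 hD1 y g i)).symm

/-- `|supp(y)| / |(y, g)|_free → 0` as `|(y, g)|_free → ∞`: for every `ε > 0` there exists
`R > 0` such that `|(y, g)|_free > R` implies `|supp(y)| ≤ ε·|(y, g)|_free`. -/
theorem card_supp_div_freeLen_tendsto_zero (nI : ι → ℝ) (nG : Γ → ℝ) (nD : Δ → ℝ)
    (hI0 : ∀ i, 0 ≤ nI i) (hG0 : ∀ g, 0 ≤ nG g)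
    (hcompat : ∀ (g : Γ) (i : ι), nI (g • i) ≤ nG g + nI i)
    (hsymm : ∀ g : Γ, nG g⁻¹ = nG g)
    (hDe : nD 1 = 0) (hD1 : ∀ d : Δ, d ≠ 1 → 1 ≤ nD d)
    (hfin : ∀ R : ℝ, 0 < R → {i : ι | nI i ≤ R}.Finite)
    (ε : ℝ) (hε : 0 < ε) :
    ∃ R : ℝ, 0 < R ∧
      ∀ (y : Monoid.CoprodI (fun _ : ι => Δ)) (g : Γ),
        freeLen nI nD y g > R →
          ((freeSupp y).card : ℝ) ≤ ε * freeLen nI nD y g := by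
  set C : ℝ := 2 / ε with hCdef
  have hC0 : 0 < C := by positivity
  set S : Finset ι := (hfin C hC0).toFinset with hSdef
  set N : ℕ := S.card with hNdef
  refine ⟨4 * (N + 1) / ε, by positivity, ?_⟩
  intro y g hR
  set F : ℝ := freeLen nI nD y g with hFdef
  have hF0 : 0 < F := lt_trans (by positivity) hR
  classical
  set A : Finset ι := (freeSupp y).filter (fun i => min (nI i) (nI (g⁻¹ • i)) ≤ C) with hAdef
  set B : Finset ι := (freeSupp y).filter (fun i => ¬ min (nI i) (nI (g⁻¹ • i)) ≤ C) with hBdef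
  have hcard : (freeSupp y).card = A.card + B.card :=
    (Finset.card_filter_add_card_filter_not (p := fun i => min (nI i) (nI (g⁻¹ • i)) ≤ C)).symm
  -- bound on A
  have hA : A ⊆ S ∪ S.image (fun i => g • i) := by
    intro i hi
    rw [hAdef, Finset.mem_filter] at hi
    rcases min_le_iff.mp hi.2 with h | h
    · exact Finset.mem_union_left _ (by simpa [hSdef, Set.Finite.mem_toFinset] using h)
    · refine Finset.mem_union_right _ (Finset.mem_image.mpr ⟨g⁻¹ • i, ?_, by simp⟩)
      simpa [hSdef, Set.Finite.mem_toFinset] using h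
  have hAcard : (A.card : ℝ) ≤ 2 * N := by
    have h2 : A.card ≤ N + N :=
      (Finset.card_le_card hA).trans
        ((Finset.card_union_le _ _).trans (add_le_add le_rfl Finset.card_image_le))
    calc (A.card : ℝ) ≤ ((N + N : ℕ) : ℝ) := Nat.cast_le.mpr h2
      _ = 2 * N := by push_cast; ring
  -- bound on B
  have hBsum : (B.card : ℝ) * C ≤ F := by
    have step1 : ∀ i ∈ B, C ≤ omegaFree nI nD y g i := by
      intro i hi
      rw [hBdef, Finset.mem_filter] at hi
      have hmin : C ≤ min (nI i) (nI (g⁻¹ • i)) := le_of_not_ge hi.2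
      have hi' : i ∈ freeSupp y := hi.1
      have hm : mFn nI y g i = min (nI i) (nI (g⁻¹ • i)) := by
        rw [mFn_apply]; simp [hi']
      have ha := aFn_nonneg nD hD1 y i
      simp only [omegaFree, Finsupp.add_apply, hm]
      linarith
    calc (B.card : ℝ) * C = ∑ _i ∈ B, C := by simp [mul_comm]
      _ ≤ ∑ i ∈ B, omegaFree nI nD y g i := Finset.sum_le_sum step1
      _ ≤ ∑ i ∈ freeSupp y, omegaFree nI nD y g i :=
          Finset.sum_le_sum_of_subset_of_nonneg
            (by rw [hBdef]; exact Finset.filter_subset _ _)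
            (fun i _ _ => omegaFree_nonneg nI nD hI0 hD1 y g i)
      _ ≤ F := sum_omega_le_freeLen nI nD hI0 hD1 y g
  have hBcard : (B.card : ℝ) ≤ ε / 2 * F := by
    have h2 : (B.card : ℝ) ≤ F / C := (le_div_iff₀ hC0).mpr hBsum
    have h3 : F / C = ε / 2 * F := by
      rw [hCdef, div_div_eq_mul_div]; ring
    rw [h3] at h2
    exact h2
  have hAcard2 : (A.card : ℝ) ≤ ε / 2 * F := by
    have h1 : 4 * ((N:ℝ) + 1) / ε < F := hR
    have h2 : 4 * ((N:ℝ) + 1) < ε * F := by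
      rw [div_lt_iff₀ hε] at h1; linarith [h1]
    nlinarith
  have : ((freeSupp y).card : ℝ) = (A.card : ℝ) + (B.card : ℝ) := by
    rw [hcard]; push_cast; ring
  rw [this]
  linarith
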